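/- Let X be a random variable with |X| ≤ 1/(1-γ) almost surely for some γ ∈ (0,1), and let B > 0, δ ∈ (0,1) satisfy P{|X| > B} ≤ δ and δ = ((1-γ)²/2) E[X²]. Then E[|X|] ≥ E[X²]/(4B). -/

import Mathlib

open MeasureTheory

theorem stmt18 {Ω : Type*} [MeasurableSpace Ω] (μ : Measure Ω)
    [IsProbabilityMeasure μ] (γ B δ : ℝ) (hγ : 0 < γ ∧ γ < 1) (hB : 0 < B)
    (hδ : 0 < δ ∧ δ < 1)
    (X : Ω → ℝ) (hX : Measurable X)
    (hbdd : ∀ᵐ ω ∂μ, |X ω| ≤ 1 / (1 - γ))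
    (htail : (μ {ω | B < |X ω|}).toReal ≤ δ)
    (hδeq : δ = (1 - γ) ^ 2 / 2 * ∫ ω, (X ω) ^ 2 ∂μ) :
    (∫ ω, (X ω) ^ 2 ∂μ) / (4 * B) ≤ ∫ ω, |X ω| ∂μ := by
  obtain ⟨hγ0, hγ1⟩ := hγ
  have hMpos : 0 < 1 - γ := by linarith
  set M : ℝ := 1 / (1 - γ) with hM
  have hM0 : 0 < M := by positivity
  have hint2 : Integrable (fun ω => (X ω) ^ 2) μ := by
    refine Integrable.mono' (integrable_const (M ^ 2)) ((hX.pow_const 2).aestronglyMeasurable) ?_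
    filter_upwards [hbdd] with ω hω
    have : |X ω| ^ 2 ≤ M ^ 2 := pow_le_pow_left₀ (abs_nonneg _) hω 2
    simpa [abs_of_nonneg (sq_nonneg (X ω)), sq_abs] using this
  have hint1 : Integrable (fun ω => |X ω|) μ := by
    refine Integrable.mono' (integrable_const M) (hX.abs.aestronglyMeasurable) ?_
    filter_upwards [hbdd] with ω hω
    simpa [abs_abs] using hω
  set T : Set Ω := {ω | B < |X ω|} with hT
  have hTm : MeasurableSet T := measurableSet_lt measurable_const hX.abs
  have hsplit : ∫ ω, (X ω) ^ 2 ∂μ =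
      (∫ ω in T, (X ω) ^ 2 ∂μ) + ∫ ω in Tᶜ, (X ω) ^ 2 ∂μ :=
    (integral_add_compl hTm hint2).symm
  -- tail part
  have htail2 : ∫ ω in T, (X ω) ^ 2 ∂μ ≤ M ^ 2 * (μ T).toReal := by
    have h1 : ∫ ω in T, (X ω) ^ 2 ∂μ ≤ ∫ _ω in T, M ^ 2 ∂μ := by
      refine integral_mono_ae (hint2.restrict) (integrable_const _) ?_
      refine ae_restrict_of_ae ?_
      filter_upwards [hbdd] with ω hω
      have := pow_le_pow_left₀ (abs_nonneg _) hω 2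
      simpa [sq_abs] using this
    simpa [setIntegral_const, smul_eq_mul, mul_comm, measureReal_def] using h1
  have hMδ : M ^ 2 * δ = (∫ ω, (X ω) ^ 2 ∂μ) / 2 := by
    rw [hδeq, hM]
    field_simp
  have htail3 : ∫ ω in T, (X ω) ^ 2 ∂μ ≤ (∫ ω, (X ω) ^ 2 ∂μ) / 2 := by
    calc ∫ ω in T, (X ω) ^ 2 ∂μ ≤ M ^ 2 * (μ T).toReal := htail2
    _ ≤ M ^ 2 * δ := by nlinarith
    _ = _ := hMδ
  -- main part
  have hmain : ∫ ω in Tᶜ, (X ω) ^ 2 ∂μ ≤ B * ∫ ω, |X ω| ∂μ := by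
    have h1 : ∫ ω in Tᶜ, (X ω) ^ 2 ∂μ ≤ ∫ ω in Tᶜ, B * |X ω| ∂μ := by
      refine setIntegral_mono_on (hint2.restrict) ((hint1.const_mul B).restrict)
        hTm.compl ?_
      intro ω hω
      have hωB : |X ω| ≤ B := by
        simpa [hT] using hω
      have : (X ω) ^ 2 = |X ω| * |X ω| := by rw [← sq_abs]; ring
      rw [this]
      exact mul_le_mul_of_nonneg_right hωB (abs_nonneg _)
    have h2 : ∫ ω in Tᶜ, B * |X ω| ∂μ = B * ∫ ω in Tᶜ, |X ω| ∂μ :=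
      integral_const_mul _ _
    have h3 : ∫ ω in Tᶜ, |X ω| ∂μ ≤ ∫ ω, |X ω| ∂μ :=
      setIntegral_le_integral hint1 (ae_of_all _ fun ω => abs_nonneg _)
    calc ∫ ω in Tᶜ, (X ω) ^ 2 ∂μ ≤ B * ∫ ω in Tᶜ, |X ω| ∂μ := by rw [← h2]; exact h1
    _ ≤ B * ∫ ω, |X ω| ∂μ := by nlinarith
  have hE2 : 0 ≤ ∫ ω, (X ω) ^ 2 ∂μ :=
    integral_nonneg fun ω => sq_nonneg _
  have hkey : (∫ ω, (X ω) ^ 2 ∂μ) / 2 ≤ B * ∫ ω, |X ω| ∂μ := by linarith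
  rw [div_le_iff₀ (by positivity)]
  nlinarith [integral_nonneg (μ := μ) (f := fun ω => |X ω|) fun ω => abs_nonneg _]
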